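/- There is an absolute constant c > 0 such that for every caterpillar G = C(m_1,...,m_n) with n spine vertices, and every pair of search trees T_1, T_2 on G in which every leg node is bound (i.e., no leg node has children), T_1 can be transformed into T_2 using at most c·n rotations. -/

import Mathlib

/-- A rooted tree (or the empty tree) on a subset `supp` of the vertex type `V`,
represented by parent pointers. -/
structure RTree (V : Type) where
  supp : Finset V
  parent : V → Option V
  parent_eq_none : ∀ v ∉ supp, parent v = none
  mem_of_parent : ∀ {v w : V}, parent v = some w → v ∈ supp ∧ w ∈ supp
  root_unique : ∀ v ∈ supp, ∀ w ∈ supp, parent v = none → parent w = none → v = w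
  reaches_root : ∀ v ∈ supp, ∃ r ∈ supp, parent r = none ∧
    Relation.ReflTransGen (fun a b => parent a = some b) v r

namespace RTree

variable {V : Type}

/-- `T.Anc a v` : `a` is an ancestor of `v` in `T` (possibly `a = v`). -/
def Anc (T : RTree V) (a v : V) : Prop :=
  Relation.ReflTransGen (fun x y => T.parent x = some y) v a

/-- `a` is a strict ancestor of `v`. -/
def StrictAnc (T : RTree V) (a v : V) : Prop := a ≠ v ∧ T.Anc a v

/-- The set of vertices of the subtree rooted at `a` (the descendants of `a`). -/
def descSet (T : RTree V) (a : V) : Set V := {v | T.Anc a v}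

/-- The depth of a node: the number of nodes on the path from the root to it
(the root has depth 1). -/
noncomputable def depth (T : RTree V) (v : V) : ℕ := Set.ncard {a | T.Anc a v}

def IsRoot (T : RTree V) (r : V) : Prop := r ∈ T.supp ∧ T.parent r = none

end RTree

/-- The restriction of a graph to a set of vertices (keeping the ambient vertex type). -/
def restrictG {V : Type} (G : SimpleGraph V) (U : Set V) : SimpleGraph V where
  Adj a b := G.Adj a b ∧ a ∈ U ∧ b ∈ U
  symm := ⟨fun a b ⟨h, ha, hb⟩ => ⟨h.symm, hb, ha⟩⟩
  loopless := ⟨fun a ⟨h, _, _⟩ => G.loopless.irrefl a h⟩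

/-- `T` is a search tree on the induced subgraph `G[U]`: its nodes are the vertices of `U`,
the subtree of every node induces a connected subgraph, and every edge of `G[U]` joins
two comparable nodes of `T`. -/
def IsSTGOn {V : Type} (G : SimpleGraph V) (U : Finset V) (T : RTree V) : Prop :=
  T.supp = U ∧
  (∀ v ∈ U, ((restrictG G ↑U).induce (T.descSet v)).Connected) ∧
  (∀ u v : V, u ∈ U → v ∈ U → G.Adj u v → T.Anc u v ∨ T.Anc v u)

/-- `T` is a search tree on the graph `G`. -/
def IsSTG {V : Type} [Fintype V] (G : SimpleGraph V) (T : RTree V) : Prop :=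
  IsSTGOn G Finset.univ T

/-- `T'` is obtained from `T` by rotating the edge `(p, c)` of `T`, where `p` is
the parent of `c`: `c` replaces `p` (becoming a child of `p`'s former parent, or the
root if `p` was the root), `p` becomes a child of `c`, `p` keeps its other children,
and each child `x` of `c` whose subtree contains a vertex of `G` adjacent to `p`
becomes a child of `p` (the other children of `c` stay children of `c`). -/
def IsRotationAt {V : Type} (G : SimpleGraph V) (T T' : RTree V) (p c : V) : Prop :=
  T.parent c = some p ∧
  T'.supp = T.supp ∧
  T'.parent c = T.parent p ∧
  T'.parent p = some c ∧
  (∀ x : V, x ≠ p → T.parent x = some c →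
    ((∃ u ∈ T.descSet x, G.Adj u p) → T'.parent x = some p) ∧
    (¬(∃ u ∈ T.descSet x, G.Adj u p) → T'.parent x = some c)) ∧
  (∀ x : V, x ≠ c → x ≠ p → T.parent x ≠ some c → T'.parent x = T.parent x)

/-- `T'` is obtained from `T` by a single rotation. -/
def IsRotation {V : Type} (G : SimpleGraph V) (T T' : RTree V) : Prop :=
  ∃ p c, IsRotationAt G T T' p c

/-- `T2` can be obtained from `T1` by exactly `k` rotations. -/
def ReachesIn {V : Type} (G : SimpleGraph V) : ℕ → RTree V → RTree V → Prop
  | 0, T1, T2 => T1 = T2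
  | k+1, T1, T2 => ∃ T', IsRotation G T1 T' ∧ ReachesIn G k T' T2

/-- Vertex type of the caterpillar `C(m_1, …, m_n)`: spine vertices `inl i` and
leg vertices `inr ⟨i, j⟩`. -/
abbrev CatV (n : ℕ) (m : Fin n → ℕ) : Type := Fin n ⊕ (Σ i : Fin n, Fin (m i))

/-- The caterpillar tree `C(m_1, …, m_n)`: the spine `s_1 - s_2 - ⋯ - s_n` is a path,
and leg `ℓ_{i,j}` is adjacent to `s_i`. -/
def caterpillar (n : ℕ) (m : Fin n → ℕ) : SimpleGraph (CatV n m) where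
  Adj x y :=
    match x, y with
    | Sum.inl i, Sum.inl j => i.val + 1 = j.val ∨ j.val + 1 = i.val
    | Sum.inl i, Sum.inr l => l.1 = i
    | Sum.inr l, Sum.inl i => l.1 = i
    | Sum.inr _, Sum.inr _ => False
  symm := ⟨by rintro (i | l) (j | l') h <;> simp_all <;> tauto⟩
  loopless := ⟨by rintro (i | l) h <;> simp_all⟩

/-- The (base 2) Shannon entropy `H(m_1, …, m_n) = ∑_{i : m_i > 0} (m_i/m) log (m/m_i)`. -/
noncomputable def shannonH {n : ℕ} (m : Fin n → ℕ) : ℝ :=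
  ∑ i, if 0 < m i then
    ((m i : ℝ) / (∑ j, (m j : ℝ))) * Real.logb 2 ((∑ j, (m j : ℝ)) / (m i : ℝ))
  else 0

/-- The parent function of the search tree `A(S, π)` on the caterpillar: the legs form a
path at the top of the tree, ordered bottom-to-top according to `π`, and the spine nodes
hang below, arranged according to the BST `S`. -/
def AParent {n : ℕ} {m : Fin n → ℕ} (S : RTree (Fin n))
    (π : Fin (∑ i, m i) ≃ (Σ i : Fin n, Fin (m i))) :
    CatV n m → Option (CatV n m) :=
  fun x => match x with
  | Sum.inl i =>
      match S.parent i with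
      | some j => some (Sum.inl j)
      | none => if h : 0 < ∑ i, m i then some (Sum.inr (π ⟨0, h⟩)) else none
  | Sum.inr l =>
      if h : (π.symm l).val + 1 < ∑ i, m i then
        some (Sum.inr (π ⟨(π.symm l).val + 1, h⟩))
      else none

/-- `T = A(S, π)`. -/
def IsA {n : ℕ} {m : Fin n → ℕ} (S : RTree (Fin n))
    (π : Fin (∑ i, m i) ≃ (Σ i : Fin n, Fin (m i))) (T : RTree (CatV n m)) : Prop :=
  T.supp = Finset.univ ∧ T.parent = AParent S π

/-- The parent function of the search tree `B(S)` on the caterpillar: every leg `ℓ_{i,j}`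
is a (childless) child of `s_i`, and the spine nodes are arranged according to `S`. -/
def BParent {n : ℕ} {m : Fin n → ℕ} (S : RTree (Fin n)) :
    CatV n m → Option (CatV n m) :=
  fun x => match x with
  | Sum.inl i => (S.parent i).map Sum.inl
  | Sum.inr l => some (Sum.inl l.1)

/-- `T = B(S)`. -/
def IsB {n : ℕ} {m : Fin n → ℕ} (S : RTree (Fin n)) (T : RTree (CatV n m)) : Prop :=
  T.supp = Finset.univ ∧ T.parent = BParent S

/-- `σ(π)`: the sequence of spine indices obtained from the leg ordering `π` by replacing
each leg `ℓ_{i,j}` with `i`. -/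
def sigmaOf {n : ℕ} {m : Fin n → ℕ}
    (π : Fin (∑ i, m i) ≃ (Σ i : Fin n, Fin (m i))) : List (Fin n) :=
  List.ofFn (fun j => (π j).1)

/-- Every leg node of `T` is bound, i.e. no leg node has a child. -/
def noFreeLegs {n : ℕ} {m : Fin n → ℕ} (T : RTree (CatV n m)) : Prop :=
  ∀ (x : CatV n m) (l : Σ i : Fin n, Fin (m i)), T.parent x ≠ some (Sum.inr l)

open Classical in
/-- The number of adjacent pairs in a list satisfying `P`. -/
noncomputable def pairAlt {α : Type} (P : α → α → Prop) : List α → ℕ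
  | [] => 0
  | [_] => 0
  | a :: b :: t => (if P a b then 1 else 0) + pairAlt P (b :: t)

open Classical in
/-- Wilber's quantity `λ(S, u, σ)`: 0 if `u` has at most one child; otherwise the number
of adjacent pairs in the restriction of `σ` to the subtree of `u` that do not both lie in
the subtree of one child of `u` and are not both equal to `u`. -/
noncomputable def wilberLam {n : ℕ} (S : RTree (Fin n)) (u : Fin n) (σ : List (Fin n)) : ℕ :=
  if (∃ v w : Fin n, v ≠ w ∧ S.parent v = some u ∧ S.parent w = some u) then
    pairAlt (fun x y =>
      ¬((x = u ∧ y = u) ∨ ∃ ch, S.parent ch = some u ∧ S.Anc ch x ∧ S.Anc ch y))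
      (σ.filter (fun x => decide (S.Anc u x)))
  else 0

/-- `λ'(S, u, σ) = λ(S, u, σ)` plus the number of occurrences of `u` in `σ`. -/
noncomputable def wilberLam' {n : ℕ} (S : RTree (Fin n)) (u : Fin n)
    (σ : List (Fin n)) : ℕ :=
  wilberLam S u σ + σ.count u

/-- Wilber's first lower bound `Λ'(S, σ) = ∑_u λ'(S, u, σ)`. -/
noncomputable def wilberL' {n : ℕ} (S : RTree (Fin n)) (σ : List (Fin n)) : ℕ :=
  ∑ u : Fin n, wilberLam' S u σ

/-- `P` is the projection `T[U]` of `T` onto `U`: its nodes are the nodes of `T` in `U`,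
and the parent of `u` in `P` is the nearest strict ancestor of `u` in `T` that lies
in `U` (which is exactly the result of pruning the vertices outside `U` one by one). -/
def IsProjOn {V : Type} [DecidableEq V] (T : RTree V) (U : Finset V) (P : RTree V) : Prop :=
  P.supp = T.supp ∩ U ∧
  ∀ u w : V, P.parent u = some w ↔
    (u ∈ U ∧ w ∈ U ∧ T.StrictAnc w u ∧ ∀ z ∈ U, T.StrictAnc z u → T.Anc z w)

/-- `P` is obtained from `T` by pruning the vertex `v`. -/
def IsPruneOf {V : Type} [DecidableEq V] (T : RTree V) (v : V) (P : RTree V) : Prop :=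
  IsProjOn T (T.supp.erase v) P

/-- `PruneSeq T l P`: `P` is obtained from `T` by successively pruning the
vertices in the list `l`, in order. -/
def PruneSeq {V : Type} [DecidableEq V] : RTree V → List V → RTree V → Prop
  | T, [], P => P = T
  | T, v :: rest, P => ∃ P', IsPruneOf T v P' ∧ PruneSeq P' rest P

/-- The number of alternations (edges whose endpoints get different colors under `f`)
on the path from the root to `z`. -/
noncomputable def altAt {V K : Type} (f : V → K) (T : RTree V) (z : V) : ℕ :=
  Set.ncard {x | T.Anc x z ∧ ∃ y, T.parent x = some y ∧ f x ≠ f y}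

/-- The alternation number of `T` w.r.t. the coloring `f`: the maximum number of
alternations on a root-to-node path. -/
noncomputable def altNum {V K : Type} (f : V → K) (T : RTree V) : ℕ :=
  T.supp.sup (fun z => altAt f T z)


/-! ### Auxiliary development -/

section Aux

open Relation

variable {V : Type}

/-- Iterated parent function. -/
def pit (f : V → Option V) : ℕ → V → Option V
  | 0, v => some v
  | k+1, v => (pit f k v).bind f

lemma pit_add (f : V → Option V) (a b : ℕ) (x : V) :
    pit f (a + b) x = (pit f a x).bind (pit f b) := by
  induction b with
  | zero =>
      show pit f a x = (pit f a x).bind (pit f 0)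
      cases pit f a x <;> rfl
  | succ b ih =>
      show (pit f (a+b) x).bind f = _
      rw [ih]
      cases pit f a x <;> simp [pit]

lemma rtg_to_pit {f : V → Option V} {x y : V}
    (h : ReflTransGen (fun a b => f a = some b) x y) : ∃ k, pit f k x = some y := by
  induction h with
  | refl => exact ⟨0, rfl⟩
  | tail _ hrel ih =>
      obtain ⟨k, hk⟩ := ih
      exact ⟨k+1, by simp [pit, hk, hrel]⟩

lemma pit_none {f : V → Option V} {x : V} {k : ℕ} (h : pit f k x = none) (j : ℕ) :
    pit f (k + j) x = none := by
  induction j with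
  | zero => exact h
  | succ j ih => show (pit f (k+j) x).bind f = none; rw [ih]; rfl

lemma pit_cycle {f : V → Option V} {x : V} {K : ℕ} (h : pit f K x = some x) (m : ℕ) :
    pit f (m * K) x = some x := by
  induction m with
  | zero => rw [Nat.zero_mul]; rfl
  | succ m ih =>
      have : (m+1) * K = m * K + K := by ring
      rw [this, pit_add, ih]
      exact h

namespace RTree

lemma anc_refl (T : RTree V) (v : V) : T.Anc v v := ReflTransGen.refl

lemma anc_trans {T : RTree V} {a b c : V} (h1 : T.Anc a b) (h2 : T.Anc b c) : T.Anc a c :=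
  ReflTransGen.trans h2 h1

lemma anc_of_parent {T : RTree V} {x y : V} (h : T.parent x = some y) : T.Anc y x :=
  ReflTransGen.single h

lemma not_anc_child {T : RTree V} {x y : V} (h : T.parent x = some y) : ¬ T.Anc x y := by
  intro hyx
  have hx : x ∈ T.supp := (T.mem_of_parent h).1
  obtain ⟨k, hk⟩ := rtg_to_pit hyx
  have hK : pit T.parent (1 + k) x = some x := by
    rw [pit_add]
    have h1 : pit T.parent 1 x = some y := by simp [pit, h]
    rw [h1]; exact hk
  obtain ⟨r, _, hrnone, hreach⟩ := T.reaches_root x hx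
  obtain ⟨j, hj⟩ := rtg_to_pit hreach
  have hnone : pit T.parent (j + 1) x = none := by
    show (pit T.parent j x).bind T.parent = none
    rw [hj]; exact hrnone
  have h1 : pit T.parent ((j+2) * (1+k)) x = some x := pit_cycle hK (j+2)
  have hge : j + 1 ≤ (j+2) * (1+k) := by nlinarith
  obtain ⟨t, ht⟩ := Nat.exists_eq_add_of_le hge
  rw [ht, pit_none hnone t] at h1
  exact nomatch h1

lemma no_self_parent (T : RTree V) (x : V) : T.parent x ≠ some x :=
  fun h => not_anc_child h (T.anc_refl x)

lemma anc_antisymm {T : RTree V} {a b : V} (h1 : T.Anc a b) (h2 : T.Anc b a) : a = b := by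
  by_cases hab : a = b
  · exact hab
  · rcases ReflTransGen.cases_head h1 with h | ⟨b1, hb1, h1'⟩
    · exact (hab h.symm).elim
    · exact absurd (show T.Anc b b1 from ReflTransGen.trans h1' h2) (not_anc_child hb1)

lemma rtg_tricho {f : V → Option V} {x u v : V}
    (hu : ReflTransGen (fun a b => f a = some b) x u)
    (hv : ReflTransGen (fun a b => f a = some b) x v) :
    ReflTransGen (fun a b => f a = some b) u v ∨ ReflTransGen (fun a b => f a = some b) v u := by
  induction hv with
  | refl => right; exact hu
  | tail hxb hrel ih =>
      rcases ih with h | h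
      · left; exact h.tail hrel
      · rcases ReflTransGen.cases_head h with h' | ⟨e, he, h'⟩
        · left; subst h'; exact ReflTransGen.single hrel
        · have : e = _ := Option.some_injective _ (he.symm.trans hrel)
          right; rwa [this] at h'

lemma anc_tricho {T : RTree V} {a b v : V} (ha : T.Anc a v) (hb : T.Anc b v) :
    T.Anc a b ∨ T.Anc b a :=
  (rtg_tricho ha hb).symm

lemma ext' {T1 T2 : RTree V} (hs : T1.supp = T2.supp) (hp : T1.parent = T2.parent) :
    T1 = T2 := by
  cases T1; cases T2
  simp_all

end RTree

end Aux


section Cater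

open Relation

variable {n : ℕ} {m : Fin n → ℕ}

/-- Spine ancestor relation. -/
def SA (T : RTree (CatV n m)) (i j : Fin n) : Prop := T.Anc (Sum.inl i) (Sum.inl j)

/-- The structural invariant maintained along rotations. -/
structure Nice (T : RTree (CatV n m)) : Prop where
  suppEq : T.supp = Finset.univ
  leg : ∀ l : (Σ i : Fin n, Fin (m i)), T.parent (Sum.inr l) = some (Sum.inl l.1)
  spine : ∀ (i : Fin n) (w : CatV n m), T.parent (Sum.inl i) = some w → ∃ k : Fin n, w = Sum.inl k
  comp : ∀ (i : Fin n) (h : i.val + 1 < n), SA T i ⟨i.val+1, h⟩ ∨ SA T ⟨i.val+1, h⟩ i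
  intv : ∀ a i j k : Fin n, SA T a i → SA T a j → i ≤ k → k ≤ j → SA T a k

variable {T : RTree (CatV n m)}

lemma sa_refl (T : RTree (CatV n m)) (i : Fin n) : SA T i i := T.anc_refl _

lemma sa_trans {a b c : Fin n} (h1 : SA T a b) (h2 : SA T b c) : SA T a c :=
  RTree.anc_trans h1 h2

lemma sa_antisymm {a b : Fin n} (h1 : SA T a b) (h2 : SA T b a) : a = b := by
  have := RTree.anc_antisymm h1 h2
  exact Sum.inl_injective this

lemma sa_of_parent {i j : Fin n} (h : T.parent (Sum.inl j) = some (Sum.inl i)) : SA T i j :=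
  RTree.anc_of_parent h

lemma Nice.leg_no_child (hT : Nice T) (x : CatV n m) (l : Σ i : Fin n, Fin (m i)) :
    T.parent x ≠ some (Sum.inr l) := by
  intro h
  cases x with
  | inl i => obtain ⟨k, hk⟩ := hT.spine i _ h; exact nomatch hk
  | inr l' =>
      rw [hT.leg l'] at h
      exact nomatch (Option.some_injective _ h)

lemma Nice.anc_of_leg (hT : Nice T) {l} {v : CatV n m} (h : T.Anc (Sum.inr l) v) :
    v = Sum.inr l := by
  rcases ReflTransGen.cases_tail h with h' | ⟨b, _, hstep⟩
  · exact h'.symm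
  · exact absurd hstep (hT.leg_no_child b l)

lemma Nice.anc_to_leg (hT : Nice T) {l} {v : CatV n m} (h : T.Anc v (Sum.inr l)) :
    v = Sum.inr l ∨ T.Anc v (Sum.inl l.1) := by
  rcases ReflTransGen.cases_head h with h' | ⟨w, hw, hrest⟩
  · exact Or.inl h'.symm
  · rw [hT.leg l] at hw
    have : (Sum.inl l.1 : CatV n m) = w := Option.some_injective _ hw
    right; rwa [← this] at hrest

lemma Nice.childToward (hT : Nice T) {u k : Fin n} (h : SA T u k) (hne : k ≠ u) :
    ∃ q : Fin n, T.parent (Sum.inl q) = some (Sum.inl u) ∧ SA T q k := by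
  rcases ReflTransGen.cases_tail h with h' | ⟨q', hq', hstep⟩
  · exact absurd (Sum.inl_injective h').symm hne
  · cases q' with
    | inr l => exact absurd (hT.anc_of_leg hq') (fun h => nomatch h)
    | inl q => exact ⟨q, hstep, hq'⟩

lemma descSide_lt {y u k : Fin n} (hT : Nice T)
    (hp : T.parent (Sum.inl y) = some (Sum.inl u)) (hlt : y < u) (hk : SA T y k) : k < u := by
  have hne : k ≠ u := by
    intro h; subst h
    exact absurd (sa_antisymm hk (sa_of_parent hp)) (Fin.ne_of_lt hlt)
  have hngt : ¬ u < k := by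
    intro h
    exact absurd (sa_antisymm (hT.intv y y k u (sa_refl T y) hk (le_of_lt hlt) (le_of_lt h))
      (sa_of_parent hp)) (Fin.ne_of_lt hlt)
  omega

lemma descSide_gt {y u k : Fin n} (hT : Nice T)
    (hp : T.parent (Sum.inl y) = some (Sum.inl u)) (hlt : u < y) (hk : SA T y k) : u < k := by
  have hne : k ≠ u := by
    intro h; subst h
    exact absurd (sa_antisymm hk (sa_of_parent hp)).symm (Fin.ne_of_lt hlt)
  have hngt : ¬ k < u := by
    intro h
    have h2 : SA T y u := hT.intv y k y u hk (sa_refl T y) (le_of_lt h) (le_of_lt hlt)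
    exact absurd (sa_antisymm h2 (sa_of_parent hp)).symm (Fin.ne_of_lt hlt)
  omega

/-- A child below its parent `u` has `u-1` in its subtree. -/
lemma belowNbr {y u : Fin n} (hT : Nice T)
    (hp : T.parent (Sum.inl y) = some (Sum.inl u)) (hlt : y < u) :
    SA T y ⟨u.val - 1, Nat.lt_of_le_of_lt (Nat.sub_le _ _) u.isLt⟩ := by
  classical
  set D : Finset (Fin n) := Finset.univ.filter (fun k => SA T y k) with hD
  have hyD : y ∈ D := by simp [hD, sa_refl]
  have hDne : D.Nonempty := ⟨y, hyD⟩
  set b : Fin n := D.max' hDne with hb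
  have hby : SA T y b := by
    have := D.max'_mem hDne
    simp only [hD, Finset.mem_filter] at this
    exact this.2
  have hmax : ∀ k, SA T y k → k ≤ b := by
    intro k hk
    exact D.le_max' k (by simp [hD, hk])
  have hblt : b < u := descSide_lt hT hp hlt hby
  -- claim : b.val + 1 = u.val
  have hkey : b.val + 1 = u.val := by
    by_contra hne'
    have hb1n : b.val + 1 < n := by have := u.isLt; omega
    set b1 : Fin n := ⟨b.val + 1, hb1n⟩ with hb1
    have hb1u : b1 < u := by
      show b.val + 1 < u.val; omega
    rcases hT.comp b hb1n with hc | hc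
    · exact absurd (hmax b1 (sa_trans hby hc)) (by simp [hb1, Fin.le_def])
    · -- hc : SA T b1 b
      rcases RTree.anc_tricho (a := (Sum.inl y : CatV n m)) hby hc with h1 | h1
      · exact absurd (hmax b1 h1) (by simp [hb1, Fin.le_def])
      · -- h1 : SA T b1 y, strict since y ≤ b < b1
        have hyb1 : y ≠ b1 := by
          have := hmax y (sa_refl T y)
          simp only [Fin.le_def] at this
          intro h; rw [h] at this; simp [hb1] at this
        rcases ReflTransGen.cases_head (h1 : T.Anc _ _) with h' | ⟨w, hw, hrest⟩
        · exact hyb1 (Sum.inl_injective h')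
        · have hw' : w = Sum.inl u := by rw [hp] at hw; exact (Option.some_injective _ hw).symm
          subst hw'
          -- hrest : RTG (inl u) (inl b1), i.e. SA T b1 u
          have hub1 : SA T b1 u := hrest
          have hne2 : u ≠ b1 := by
            intro h; rw [h] at hne'; simp [hb1] at hne'
          obtain ⟨q, hq, hqu⟩ := hT.childToward hub1 hne2
          have hqb : SA T q b := sa_trans (sa_trans hqu (sa_of_parent hp)) hby
          have hqb1 : SA T q b1 := hT.intv q b u b1 hqb hqu
            (by simp [hb1, Fin.le_def]) (le_of_lt hb1u)
          have : q = b1 := sa_antisymm hqb1 (sa_of_parent hq)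
          rw [this] at hq
          exact T.no_self_parent _ hq
  simp only [SA]
  have : (⟨u.val - 1, Nat.lt_of_le_of_lt (Nat.sub_le _ _) u.isLt⟩ : Fin n) = b := by
    apply Fin.ext; simp; omega
  rw [this]; exact hby

/-- A child above its parent `u` has `u+1` in its subtree. -/
lemma aboveNbr {y u : Fin n} (hT : Nice T)
    (hp : T.parent (Sum.inl y) = some (Sum.inl u)) (hlt : u < y) :
    ∃ h1 : u.val + 1 < n, SA T y ⟨u.val + 1, h1⟩ := by
  classical
  have hu1n : u.val + 1 < n := by have := y.isLt; omega
  refine ⟨hu1n, ?_⟩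
  set D : Finset (Fin n) := Finset.univ.filter (fun k => SA T y k) with hD
  have hyD : y ∈ D := by simp [hD, sa_refl]
  have hDne : D.Nonempty := ⟨y, hyD⟩
  set b : Fin n := D.min' hDne with hb
  have hby : SA T y b := by
    have := D.min'_mem hDne
    simp only [hD, Finset.mem_filter] at this
    exact this.2
  have hmin : ∀ k, SA T y k → b ≤ k := by
    intro k hk
    exact D.min'_le k (by simp [hD, hk])
  have hblt : u < b := descSide_gt hT hp hlt hby
  have hkey : u.val + 1 = b.val := by
    by_contra hne'
    have hbpos : 0 < b.val := by omega
    set b1 : Fin n := ⟨b.val - 1, Nat.lt_of_le_of_lt (Nat.sub_le _ _) b.isLt⟩ with hb1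
    have hub1 : u < b1 := by simp only [Fin.lt_def, hb1]; omega
    have hb1b : b1.val + 1 = b.val := by simp [hb1]; omega
    have hb1n : b1.val + 1 < n := by rw [hb1b]; exact b.isLt
    have hbeq : (⟨b1.val + 1, hb1n⟩ : Fin n) = b := Fin.ext hb1b
    rcases hT.comp b1 hb1n with hc | hc
    · -- SA T b1 (b1+1) = SA T b1 b : b1 is an ancestor of b
      rw [hbeq] at hc
      rcases RTree.anc_tricho (a := (Sum.inl y : CatV n m)) hby hc with h1 | h1
      · exact absurd (hmin b1 h1) (by simp [hb1, Fin.le_def] <;> omega)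
      · have hyb1 : y ≠ b1 := by
          have := hmin y (sa_refl T y)
          simp only [Fin.le_def] at this
          intro h; rw [h] at this; simp only [hb1] at this; omega
        rcases ReflTransGen.cases_head (h1 : T.Anc _ _) with h' | ⟨w, hw, hrest⟩
        · exact hyb1 (Sum.inl_injective h')
        · have hw' : w = Sum.inl u := by rw [hp] at hw; exact (Option.some_injective _ hw).symm
          subst hw'
          have hub1' : SA T b1 u := hrest
          have hne2 : u ≠ b1 := Fin.ne_of_lt hub1
          obtain ⟨q, hq, hqu⟩ := hT.childToward hub1' hne2
          have hqb : SA T q b := sa_trans (sa_trans hqu (sa_of_parent hp)) hby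
          have hqb1 : SA T q b1 := hT.intv q u b b1 hqu hqb
            (le_of_lt hub1) (by simp [hb1, Fin.le_def] <;> omega)
          have : q = b1 := sa_antisymm hqb1 (sa_of_parent hq)
          rw [this] at hq
          exact T.no_self_parent _ hq
    · rw [hbeq] at hc
      exact absurd (hmin b1 (sa_trans hby hc)) (by simp [hb1, Fin.le_def] <;> omega)
  have : (⟨u.val + 1, hu1n⟩ : Fin n) = b := Fin.ext hkey
  rw [this]; exact hby

/-- Unique below-child. -/
lemma uniqueBelow {y1 y2 u : Fin n} (hT : Nice T)
    (h1 : T.parent (Sum.inl y1) = some (Sum.inl u)) (hl1 : y1 < u)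
    (h2 : T.parent (Sum.inl y2) = some (Sum.inl u)) (hl2 : y2 < u) : y1 = y2 := by
  have hn1 := belowNbr hT h1 hl1
  have hn2 := belowNbr hT h2 hl2
  have key : ∀ a b : Fin n, T.parent (Sum.inl a) = some (Sum.inl u) →
      SA T a b → T.parent (Sum.inl b) = some (Sum.inl u) → a = b := by
    intro a b hpa hab hpb
    by_contra hne
    rcases ReflTransGen.cases_head (hab : T.Anc _ _) with h' | ⟨w, hw, hrest⟩
    · exact hne (Sum.inl_injective h').symm
    · rw [hpb] at hw
      have hw' : w = Sum.inl u := (Option.some_injective _ hw).symm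
      subst hw'
      have : SA T a u := hrest
      have : a = u := sa_antisymm this (sa_of_parent hpa)
      rw [this] at hpa
      exact T.no_self_parent _ hpa
  rcases RTree.anc_tricho (v := (Sum.inl (⟨u.val - 1, Nat.lt_of_le_of_lt (Nat.sub_le _ _) u.isLt⟩ : Fin n) : CatV n m)) hn1 hn2 with h | h
  · exact key y1 y2 h1 h h2
  · exact (key y2 y1 h2 h h1).symm

/-- Unique above-child. -/
lemma uniqueAbove {y1 y2 u : Fin n} (hT : Nice T)
    (h1 : T.parent (Sum.inl y1) = some (Sum.inl u)) (hl1 : u < y1)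
    (h2 : T.parent (Sum.inl y2) = some (Sum.inl u)) (hl2 : u < y2) : y1 = y2 := by
  obtain ⟨hn, hn1⟩ := aboveNbr hT h1 hl1
  obtain ⟨_, hn2⟩ := aboveNbr hT h2 hl2
  have key : ∀ a b : Fin n, T.parent (Sum.inl a) = some (Sum.inl u) →
      SA T a b → T.parent (Sum.inl b) = some (Sum.inl u) → a = b := by
    intro a b hpa hab hpb
    by_contra hne
    rcases ReflTransGen.cases_head (hab : T.Anc _ _) with h' | ⟨w, hw, hrest⟩
    · exact hne (Sum.inl_injective h').symm
    · rw [hpb] at hw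
      have hw' : w = Sum.inl u := (Option.some_injective _ hw).symm
      subst hw'
      have : SA T a u := hrest
      have : a = u := sa_antisymm this (sa_of_parent hpa)
      rw [this] at hpa
      exact T.no_self_parent _ hpa
  rcases RTree.anc_tricho (v := (Sum.inl (⟨u.val + 1, hn⟩ : Fin n) : CatV n m)) hn1 hn2 with h | h
  · exact key y1 y2 h1 h h2
  · exact (key y2 y1 h2 h h1).symm

/-- Everything in `desc p` below `p` lies in the subtree of the below-child `c`. -/
lemma belowDesc {c p k : Fin n} (hT : Nice T)
    (hp : T.parent (Sum.inl c) = some (Sum.inl p)) (hlt : c < p)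
    (hk : SA T p k) (hkp : k < p) : SA T c k := by
  obtain ⟨q, hq, hqk⟩ := hT.childToward hk (Fin.ne_of_lt hkp)
  have hqp : q < p := by
    have hne : q ≠ p := by
      intro h; rw [h] at hq; exact T.no_self_parent _ hq
    have : ¬ p < q := by
      intro h
      have := descSide_gt hT hq h hqk
      omega
    omega
  rw [uniqueBelow hT hp hlt hq hqp]
  exact hqk

end Cater


section Rot

open Relation

variable {n : ℕ} {m : Fin n → ℕ}

/-- `p - 1` as an element of `Fin n`. -/
def fpred (p : Fin n) : Fin n := ⟨p.val - 1, Nat.lt_of_le_of_lt (Nat.sub_le _ _) p.isLt⟩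

/-- The vertices that get moved from `c` to `p` during the rotation. -/
def Mv (T : RTree (CatV n m)) (c p : Fin n) (v : CatV n m) : Prop :=
  T.parent v = some (Sum.inl c) ∧ T.Anc v (Sum.inl (fpred p))

open Classical in
/-- The parent function after rotating the edge `(p, c)`. -/
noncomputable def rparent (T : RTree (CatV n m)) (c p : Fin n) : CatV n m → Option (CatV n m) :=
  fun v =>
    if v = Sum.inl c then T.parent (Sum.inl p)
    else if v = Sum.inl p then some (Sum.inl c)
    else if Mv T c p v then some (Sum.inl p)
    else T.parent v

variable {T : RTree (CatV n m)} {c p : Fin n}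

lemma rparent_c : rparent T c p (Sum.inl c) = T.parent (Sum.inl p) := if_pos rfl

lemma rparent_p (hne : c ≠ p) : rparent T c p (Sum.inl p) = some (Sum.inl c) := by
  unfold rparent
  rw [if_neg (by simp [hne.symm]), if_pos rfl]

lemma rparent_mv {v : CatV n m} (h1 : v ≠ Sum.inl c) (h2 : v ≠ Sum.inl p) (h3 : Mv T c p v) :
    rparent T c p v = some (Sum.inl p) := by
  unfold rparent
  rw [if_neg h1, if_neg h2, if_pos h3]

lemma rparent_other {v : CatV n m} (h1 : v ≠ Sum.inl c) (h2 : v ≠ Sum.inl p) (h3 : ¬ Mv T c p v) :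
    rparent T c p v = T.parent v := by
  unfold rparent
  rw [if_neg h1, if_neg h2, if_neg h3]

section Facts

lemma hpc' (hP : T.parent (Sum.inl c) = some (Sum.inl p)) :
    T.Anc (Sum.inl p) (Sum.inl c) := RTree.anc_of_parent hP

lemma notAncCP (hP : T.parent (Sum.inl c) = some (Sum.inl p)) : ¬ T.Anc (Sum.inl c) (Sum.inl p) :=
  RTree.not_anc_child hP

lemma mv_spine (hT : Nice T) {v : CatV n m} (h : Mv T c p v) : ∃ x : Fin n, v = Sum.inl x := by
  cases v with
  | inl x => exact ⟨x, rfl⟩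
  | inr l => exact absurd (hT.anc_of_leg h.2) (fun h => nomatch h)

lemma mv_ne_c {x : Fin n} (h : Mv T c p (Sum.inl x)) : x ≠ c := by
  intro he; rw [he] at h
  exact T.no_self_parent _ h.1

lemma mv_ne_p (hP : T.parent (Sum.inl c) = some (Sum.inl p)) {x : Fin n}
    (h : Mv T c p (Sum.inl x)) : x ≠ p := by
  intro he; rw [he] at h
  exact notAncCP hP (RTree.anc_of_parent h.1)

lemma sa_p_pm1 (hT : Nice T) (hP : T.parent (Sum.inl c) = some (Sum.inl p)) (hlt : c < p) :
    SA T p (fpred p) := by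
  refine hT.intv p c p (fpred p) (sa_of_parent hP) (sa_refl T p) ?_ ?_ <;>
    simp [fpred, Fin.le_def] <;> omega

lemma sa_c_pm1 (hT : Nice T) (hP : T.parent (Sum.inl c) = some (Sum.inl p)) (hlt : c < p) :
    SA T c (fpred p) := by
  by_cases h : fpred p = c
  · rw [h]; exact sa_refl T c
  · refine belowDesc hT hP hlt (sa_p_pm1 hT hP hlt) ?_
    simp only [Fin.lt_def, fpred]
    have : (fpred p).val ≤ c.val ∨ c.val < (fpred p).val := by omega
    rcases this with h' | h'
    · simp only [fpred] at h' ⊢; omega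
    · simp only [fpred] at h' ⊢; omega

lemma desc_c_lt (hT : Nice T) (hP : T.parent (Sum.inl c) = some (Sum.inl p)) (hlt : c < p)
    {k : Fin n} (h : SA T c k) : k < p := descSide_lt hT hP hlt h

/-- Vertices in a moved subtree have spine index `> c`. -/
lemma mv_gt (hT : Nice T) (hP : T.parent (Sum.inl c) = some (Sum.inl p)) (hlt : c < p)
    {x : Fin n} (h : Mv T c p (Sum.inl x)) {k : Fin n} (hk : SA T x k) : c < k := by
  have hxc : ¬ SA T x c := by
    intro hxc
    exact mv_ne_c h (sa_antisymm hxc (sa_of_parent h.1))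
  have hcpm1 : c.val ≤ (fpred p).val := by
    simp only [fpred]; omega
  rcases lt_or_ge c k with h' | h'
  · exact h'
  · exfalso
    exact hxc (hT.intv x k (fpred p) c hk h.2 h' hcpm1)

lemma mv_self_gt (hT : Nice T) (hP : T.parent (Sum.inl c) = some (Sum.inl p)) (hlt : c < p)
    {x : Fin n} (h : Mv T c p (Sum.inl x)) : c < x :=
  mv_gt hT hP hlt h (sa_refl T x)

end Facts

lemma chain_transfer (hT : Nice T) {v x : CatV n m}
    (h : ReflTransGen (fun a b => T.parent a = some b) v x)
    (hyp : ∀ y, ReflTransGen (fun a b => T.parent a = some b) v y →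
      (y = x ∨ (y ≠ Sum.inl c ∧ y ≠ Sum.inl p ∧ ¬ Mv T c p y))) :
    ReflTransGen (fun a b => rparent T c p a = some b) v x := by
  induction h using ReflTransGen.head_induction_on with
  | refl => exact ReflTransGen.refl
  | head hab hbx ih =>
      rename_i a b
      rcases hyp a ReflTransGen.refl with h' | ⟨h1, h2, h3⟩
      · rw [h']
      · refine ReflTransGen.head ?_ (ih ?_)
        · rw [rparent_other h1 h2 h3]; exact hab
        · intro y hy
          exact hyp y (ReflTransGen.head hab hy)

lemma rot_reaches (hT : Nice T) (hP : T.parent (Sum.inl c) = some (Sum.inl p)) (hlt : c < p) :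
    ∃ r : CatV n m, rparent T c p r = none ∧
      ∀ v : CatV n m, ReflTransGen (fun a b => rparent T c p a = some b) v r := by
  have hcpne : c ≠ p := Fin.ne_of_lt hlt
  set f' := rparent T c p with hf'
  -- parametrized main induction
  have main : ∀ r : CatV n m,
      (∀ v : CatV n m, T.parent v = none → ReflTransGen (fun a b => f' a = some b) v r) →
      ReflTransGen (fun a b => f' a = some b) (Sum.inl c) r →
      ∀ v : CatV n m, ReflTransGen (fun a b => f' a = some b) v r := by
    intro r hr hc
    have claim : ∀ N : ℕ, ∀ v : CatV n m, Set.ncard {y | T.Anc y v} ≤ N →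
        ReflTransGen (fun a b => f' a = some b) v r := by
      intro N
      induction N with
      | zero =>
          intro v hv
          have : 0 < Set.ncard {y | T.Anc y v} :=
            (Set.ncard_pos (Set.toFinite _)).mpr ⟨v, T.anc_refl v⟩
          omega
      | succ N ih =>
          intro v hv
          by_cases hvc : v = Sum.inl c
          · rw [hvc]; exact hc
          by_cases hvp : v = Sum.inl p
          · rw [hvp]
            exact ReflTransGen.head (by rw [hf', rparent_p hcpne]) hc
          by_cases hvm : Mv T c p v
          · refine ReflTransGen.head (b := Sum.inl p) (by rw [hf', rparent_mv hvc hvp hvm]) ?_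
            exact ReflTransGen.head (by rw [hf', rparent_p hcpne]) hc
          cases hpv : T.parent v with
          | none => exact hr v hpv
          | some w =>
              have hsub : {y | T.Anc y w} ⊂ {y | T.Anc y v} := by
                constructor
                · intro y hy
                  exact RTree.anc_trans hy (RTree.anc_of_parent hpv)
                · intro hss
                  exact RTree.not_anc_child hpv (hss (T.anc_refl v))
              have hlt' : Set.ncard {y | T.Anc y w} < Set.ncard {y | T.Anc y v} :=
                Set.ncard_lt_ncard hsub (Set.toFinite _)
              refine ReflTransGen.head ?_ (ih w (by omega))
              rw [hf', rparent_other hvc hvp hvm]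
              exact hpv
    intro v
    exact claim (Set.ncard {y | T.Anc y v}) v le_rfl
  by_cases hpr : T.parent (Sum.inl p) = none
  · -- `p` was the root; the new root is `c`
    have hroot : f' (Sum.inl c) = none := by rw [hf', rparent_c]; exact hpr
    refine ⟨Sum.inl c, hroot, ?_⟩
    refine main (Sum.inl c) ?_ ReflTransGen.refl
    intro v hv
    have : v = Sum.inl p := by
      refine T.root_unique v ?_ (Sum.inl p) ?_ hv hpr <;>
        rw [hT.suppEq] <;> exact Finset.mem_univ _
    rw [this]
    exact ReflTransGen.single (by rw [hf', rparent_p hcpne])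
  · -- `p` was not the root
    obtain ⟨w0, hpg⟩ := Option.ne_none_iff_exists'.mp hpr
    obtain ⟨g, hg⟩ := hT.spine p w0 hpg
    rw [hg] at hpg
    -- old root
    obtain ⟨r0, hr0mem, hr0none, hr0reach⟩ :=
      T.reaches_root (Sum.inl p) (by rw [hT.suppEq]; exact Finset.mem_univ _)
    -- old chain from c upward: c → p → g
    have hchain_cg : ReflTransGen (fun a b => T.parent a = some b) (Sum.inl c) (Sum.inl g) :=
      ReflTransGen.head hP (ReflTransGen.single hpg)
    -- ancestors of g avoid the modified vertices
    have hganc : ∀ y, ReflTransGen (fun a b => T.parent a = some b) (Sum.inl g) y →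
        (y ≠ Sum.inl c ∧ y ≠ Sum.inl p ∧ ¬ Mv T c p y) := by
      intro y hy
      refine ⟨?_, ?_, ?_⟩
      · intro he; rw [he] at hy
        -- hy : RTG g c, i.e. Anc c g ; chain c→g gives Anc g c
        have := RTree.anc_antisymm (show T.Anc (Sum.inl c) (Sum.inl g) from hy)
          (show T.Anc (Sum.inl g) (Sum.inl c) from hchain_cg)
        have hcg : c = g := Sum.inl_injective this
        rw [← hcg] at hpg
        exact notAncCP hP (RTree.anc_of_parent hpg)
      · intro he; rw [he] at hy
        have := RTree.anc_antisymm (show T.Anc (Sum.inl p) (Sum.inl g) from hy)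
          (show T.Anc (Sum.inl g) (Sum.inl p) from ReflTransGen.single hpg)
        have hpg' : p = g := Sum.inl_injective this
        rw [← hpg'] at hpg
        exact T.no_self_parent _ hpg
      · intro hm
        -- hm.1 : T.parent y = some (inl c); chain c → g and hy : RTG g y
        have : ReflTransGen (fun a b => T.parent a = some b) (Sum.inl c) y :=
          ReflTransGen.trans hchain_cg hy
        exact RTree.not_anc_child hm.1 this
    have hr0ne : r0 ≠ Sum.inl c ∧ r0 ≠ Sum.inl p ∧ ¬ Mv T c p r0 := by
      refine ⟨?_, ?_, ?_⟩
      · intro he; rw [he, hP] at hr0none; exact nomatch hr0none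
      · intro he; rw [he] at hr0none; exact hpr hr0none
      · intro hm
        have := hm.1
        rw [hr0none] at this
        exact nomatch this
    have hGr0 : ReflTransGen (fun a b => T.parent a = some b) (Sum.inl g) r0 := by
      rcases ReflTransGen.cases_head hr0reach with h' | ⟨w, hw, hrest⟩
      · rw [← h'] at hr0none; exact absurd hr0none hpr
      · have : w = Sum.inl g := Option.some_injective _ (hpg ▸ hw).symm
        rwa [this] at hrest
    have hnewc : ReflTransGen (fun a b => f' a = some b) (Sum.inl c) r0 := by
      refine ReflTransGen.head (b := Sum.inl g) (by rw [hf', rparent_c]; exact hpg) ?_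
      refine chain_transfer hT hGr0 ?_
      intro y hy
      exact Or.inr (hganc y hy)
    refine ⟨r0, ?_, ?_⟩
    · rw [hf', rparent_other hr0ne.1 hr0ne.2.1 hr0ne.2.2]
      exact hr0none
    · refine main r0 ?_ hnewc
      intro v hv
      have : v = r0 := by
        refine T.root_unique v ?_ r0 ?_ hv hr0none <;>
          rw [hT.suppEq] <;> exact Finset.mem_univ _
      rw [this]


/-- The rotated tree. -/
noncomputable def rotTree (T : RTree (CatV n m)) (c p : Fin n) (hT : Nice T)
    (hP : T.parent (Sum.inl c) = some (Sum.inl p)) (hlt : c < p) : RTree (CatV n m) where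
  supp := Finset.univ
  parent := rparent T c p
  parent_eq_none := fun v hv => absurd (Finset.mem_univ v) hv
  mem_of_parent := fun _ => ⟨Finset.mem_univ _, Finset.mem_univ _⟩
  root_unique := by
    have hcpne : c ≠ p := Fin.ne_of_lt hlt
    have key : ∀ u : CatV n m, rparent T c p u = none →
        (u = Sum.inl c ∧ T.parent (Sum.inl p) = none) ∨
        (T.parent u = none ∧ u ≠ Sum.inl c ∧ u ≠ Sum.inl p) := by
      intro u hu
      by_cases h1 : u = Sum.inl c
      · left; refine ⟨h1, ?_⟩; rwa [h1, rparent_c] at hu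
      by_cases h2 : u = Sum.inl p
      · rw [h2, rparent_p hcpne] at hu; exact nomatch hu
      by_cases h3 : Mv T c p u
      · rw [rparent_mv h1 h2 h3] at hu; exact nomatch hu
      · right; exact ⟨by rwa [rparent_other h1 h2 h3] at hu, h1, h2⟩
    intro v _ w _ hv hw
    have hmem : ∀ z : CatV n m, z ∈ T.supp := by
      intro z; rw [hT.suppEq]; exact Finset.mem_univ _
    rcases key v hv with ⟨hv1, hv2⟩ | ⟨hv1, hv2, hv3⟩ <;>
      rcases key w hw with ⟨hw1, hw2⟩ | ⟨hw1, hw2, hw3⟩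
    · rw [hv1, hw1]
    · exact absurd (T.root_unique _ (hmem _) _ (hmem _) hv2 hw1).symm hw3
    · exact absurd (T.root_unique _ (hmem _) _ (hmem _) hw2 hv1).symm hv3
    · exact T.root_unique _ (hmem _) _ (hmem _) hv1 hw1
  reaches_root := by
    intro v _
    obtain ⟨r, h1, h2⟩ := rot_reaches hT hP hlt
    exact ⟨r, Finset.mem_univ _, h1, h2 v⟩

lemma rotTree_parent (hT : Nice T) (hP : T.parent (Sum.inl c) = some (Sum.inl p)) (hlt : c < p) :
    (rotTree T c p hT hP hlt).parent = rparent T c p := rfl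

section Char

variable (hT : Nice T) (hP : T.parent (Sum.inl c) = some (Sum.inl p)) (hlt : c < p)

/-- K1: the new subtree of `c` is the old subtree of `p`. -/
lemma rot_anc_c {v : CatV n m} :
    (rotTree T c p hT hP hlt).Anc (Sum.inl c) v ↔ T.Anc (Sum.inl p) v := by
  have hcpne : c ≠ p := Fin.ne_of_lt hlt
  constructor
  · intro h
    induction h using ReflTransGen.head_induction_on with
    | refl => exact hpc' hP
    | head hab hbx ih =>
        rename_i a b
        by_cases hac : a = Sum.inl c
        · rw [hac]; exact hpc' hP
        by_cases hap : a = Sum.inl p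
        · rw [hap]; exact T.anc_refl _
        by_cases ham : Mv T c p a
        · exact ReflTransGen.head ham.1 (ReflTransGen.single hP)
        · have : T.parent a = some b := by
            rw [← rparent_other (T := T) (c := c) (p := p) hac hap ham]; exact hab
          exact ReflTransGen.head this ih
  · intro h
    induction h using ReflTransGen.head_induction_on with
    | refl => exact ReflTransGen.single (rparent_p hcpne)
    | head hab hbx ih =>
        rename_i a b
        by_cases hac : a = Sum.inl c
        · rw [hac]; exact ReflTransGen.refl
        by_cases hap : a = Sum.inl p
        · rw [hap]; exact ReflTransGen.single (rparent_p hcpne)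
        by_cases ham : Mv T c p a
        · exact ReflTransGen.head (rparent_mv hac hap ham)
            (ReflTransGen.single (rparent_p hcpne))
        · exact ReflTransGen.head (by rw [show (rotTree T c p hT hP hlt).parent = rparent T c p from rfl, rparent_other hac hap ham]; exact hab) ih

/-- K3: subtrees of other vertices are unchanged. -/
lemma rot_anc_other {a v : CatV n m} (ha1 : a ≠ Sum.inl c) (ha2 : a ≠ Sum.inl p) :
    (rotTree T c p hT hP hlt).Anc a v ↔ T.Anc a v := by
  have hcpne : c ≠ p := Fin.ne_of_lt hlt
  constructor
  · intro h
    induction h using ReflTransGen.head_induction_on with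
    | refl => exact T.anc_refl _
    | head hab hbx ih =>
        rename_i x w
        by_cases hxc : x = Sum.inl c
        · subst hxc
          have hw : T.parent (Sum.inl p) = some w := by
            rwa [rotTree_parent, rparent_c] at hab
          exact ReflTransGen.head hP (ReflTransGen.head hw ih)
        by_cases hxp : x = Sum.inl p
        · subst hxp
          have hab' : rparent T c p (Sum.inl p) = some w := by rwa [rotTree_parent] at hab
          have hw : w = Sum.inl c := Option.some_injective _ ((rparent_p hcpne (T := T)) ▸ hab').symm
          subst hw
          rcases ReflTransGen.cases_head ih with h' | ⟨e, he, hrest⟩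
          · exact absurd h'.symm ha1
          · have : e = Sum.inl p := Option.some_injective _ (hP ▸ he).symm
            rwa [this] at hrest
        by_cases hxm : Mv T c p x
        · have hab' : rparent T c p x = some w := by rwa [rotTree_parent] at hab
          have hw : w = Sum.inl p := Option.some_injective _ ((rparent_mv hxc hxp hxm) ▸ hab').symm
          subst hw
          exact ReflTransGen.head hxm.1 (ReflTransGen.head hP ih)
        · exact ReflTransGen.head
            (by rw [rotTree_parent, rparent_other hxc hxp hxm] at hab; exact hab) ih
  · intro h
    induction h using ReflTransGen.head_induction_on with
    | refl => exact ReflTransGen.refl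
    | head hab hbx ih =>
        rename_i x w
        by_cases hxc : x = Sum.inl c
        · subst hxc
          have hw : w = Sum.inl p := Option.some_injective _ (hP ▸ hab).symm
          subst hw
          rcases ReflTransGen.cases_head ih with h' | ⟨e, he, hrest⟩
          · exact absurd h'.symm ha2
          · have he' : rparent T c p (Sum.inl p) = some e := he
            have : e = Sum.inl c :=
              Option.some_injective _ ((rparent_p hcpne (T := T)) ▸ he').symm
            rwa [this] at hrest
        by_cases hxp : x = Sum.inl p
        · subst hxp
          refine ReflTransGen.head (rparent_p hcpne) (ReflTransGen.head ?_ ih)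
          show rparent T c p (Sum.inl c) = some w
          rw [rparent_c]; exact hab
        by_cases hxm : Mv T c p x
        · have hw : w = Sum.inl c := Option.some_injective _ (hxm.1 ▸ hab).symm
          subst hw
          exact ReflTransGen.head (rparent_mv hxc hxp hxm)
            (ReflTransGen.head (rparent_p hcpne) ih)
        · exact ReflTransGen.head (by rw [show (rotTree T c p hT hP hlt).parent = rparent T c p from rfl, rparent_other hxc hxp hxm]; exact hab) ih

/-- K2: the new subtree of `p`. -/
lemma rot_anc_p {v : CatV n m} :
    (rotTree T c p hT hP hlt).Anc (Sum.inl p) v ↔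
      (v = Sum.inl p ∨ (∃ x : Fin n, Mv T c p (Sum.inl x) ∧ T.Anc (Sum.inl x) v) ∨
        (T.Anc (Sum.inl p) v ∧ ¬ T.Anc (Sum.inl c) v)) := by
  have hcpne : c ≠ p := Fin.ne_of_lt hlt
  constructor
  · intro h
    induction h using ReflTransGen.head_induction_on with
    | refl => exact Or.inl rfl
    | head hab hbx ih =>
        rename_i x w
        by_cases hxc : x = Sum.inl c
        · subst hxc
          exfalso
          have hw : T.parent (Sum.inl p) = some w := by
            rwa [rotTree_parent, rparent_c] at hab
          have h1 : (rotTree T c p hT hP hlt).Anc (Sum.inl p) w := hbx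
          have h2 : (rotTree T c p hT hP hlt).Anc w (Sum.inl p) :=
            ReflTransGen.head (rparent_p hcpne)
              (ReflTransGen.single (show rparent T c p (Sum.inl c) = some w by
                rw [rparent_c]; exact hw))
          have := RTree.anc_antisymm h1 h2
          rw [← this] at hw
          exact T.no_self_parent _ hw
        by_cases hxp : x = Sum.inl p
        · exact Or.inl hxp
        by_cases hxm : Mv T c p x
        · obtain ⟨x', hx'⟩ := mv_spine hT hxm
          subst hx'
          exact Or.inr (Or.inl ⟨x', hxm, T.anc_refl _⟩)
        · have hab' : T.parent x = some w := by
            rwa [rotTree_parent, rparent_other hxc hxp hxm] at hab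
          rcases ih with h' | ⟨x', hx', hanc⟩ | ⟨hpw, hncw⟩
          · subst h'
            refine Or.inr (Or.inr ⟨ReflTransGen.single hab', ?_⟩)
            intro hcx
            rcases ReflTransGen.cases_head hcx with h' | ⟨e, he, hrest⟩
            · exact hxc h'
            · have : e = Sum.inl p := Option.some_injective _ (hab' ▸ he).symm
              rw [this] at hrest
              exact notAncCP hP hrest
          · exact Or.inr (Or.inl ⟨x', hx', ReflTransGen.head hab' hanc⟩)
          · refine Or.inr (Or.inr ⟨ReflTransGen.head hab' hpw, ?_⟩)
            intro hcx
            rcases ReflTransGen.cases_head hcx with h' | ⟨e, he, hrest⟩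
            · exact hxc h'
            · have : e = w := Option.some_injective _ (hab' ▸ he).symm
              rw [this] at hrest
              exact hncw hrest
  · intro h
    rcases h with h' | ⟨x', hx', hanc⟩ | ⟨hpv, hncv⟩
    · rw [h']; exact RTree.anc_refl _ _
    · have h1 : (rotTree T c p hT hP hlt).Anc (Sum.inl x') v := by
        rw [rot_anc_other hT hP hlt (by simp [mv_ne_c hx']) (by simp [mv_ne_p hP hx'])]
        exact hanc
      exact ReflTransGen.tail h1 (rparent_mv (by simp [mv_ne_c hx']) (by simp [mv_ne_p hP hx']) hx')
    · refine chain_transfer hT hpv ?_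
      intro y hy
      by_cases hyp' : y = Sum.inl p
      · exact Or.inl hyp'
      refine Or.inr ⟨?_, hyp', ?_⟩
      · intro he; rw [he] at hy; exact hncv hy
      · intro hm
        exact hncv (ReflTransGen.tail hy hm.1)

end Char


section Derived

variable (hT : Nice T) (hP : T.parent (Sum.inl c) = some (Sum.inl p)) (hlt : c < p)

/-- Spine version of K2. -/
lemma rot_sa_p {k : Fin n} :
    SA (rotTree T c p hT hP hlt) p k ↔ (SA T p k ∧ c < k) := by
  constructor
  · intro h
    rcases (rot_anc_p hT hP hlt).mp h with h' | ⟨x', hx', hanc⟩ | ⟨hpk, hnck⟩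
    · have : k = p := Sum.inl_injective h'
      exact ⟨by rw [this]; exact sa_refl T p, by rw [this]; exact hlt⟩
    · refine ⟨?_, mv_gt hT hP hlt hx' hanc⟩
      exact RTree.anc_trans (RTree.anc_trans (hpc' hP) (RTree.anc_of_parent hx'.1)) hanc
    · refine ⟨hpk, ?_⟩
      have hkc : k ≠ c := by
        intro he; rw [he] at hnck; exact hnck (T.anc_refl _)
      have : ¬ k < c := by
        intro hkc'
        exact hnck (belowDesc hT hP hlt hpk (by omega))
      omega
  · rintro ⟨hpk, hck⟩
    refine (rot_anc_p hT hP hlt).mpr ?_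
    by_cases hck' : T.Anc (Sum.inl c) (Sum.inl k)
    · -- k is in the (moved) above-part of `c`'s subtree
      have hkc : k ≠ c := Fin.ne_of_gt hck
      obtain ⟨q, hq, hqk⟩ := hT.childToward hck' hkc
      have hqc : c < q := by
        have hne : q ≠ c := by
          intro he; rw [he] at hq; exact T.no_self_parent _ hq
        rcases lt_or_ge c q with h' | h'
        · exact h'
        · exfalso
          have := descSide_lt hT hq (lt_of_le_of_ne h' hne) hqk
          omega
      have hcpm1 : c ≠ fpred p := by
        intro he
        have hkp : k < p := desc_c_lt hT hP hlt hck'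
        have : c.val = p.val - 1 := by rw [he]; rfl
        omega
      have hcpm1' : c < fpred p := by
        have : c.val ≤ p.val - 1 := by omega
        rcases lt_or_ge c (fpred p) with h' | h'
        · exact h'
        · exfalso
          have h2 : (fpred p).val ≤ c.val := h'
          have h3 : (fpred p).val = p.val - 1 := rfl
          exact hcpm1 (Fin.ext (by omega))
      obtain ⟨q2, hq2, hq2k⟩ := hT.childToward (sa_c_pm1 hT hP hlt) (Fin.ne_of_gt hcpm1')
      have hq2c : c < q2 := by
        have hne : q2 ≠ c := by
          intro he; rw [he] at hq2; exact T.no_self_parent _ hq2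
        rcases lt_or_ge c q2 with h' | h'
        · exact h'
        · exfalso
          have h2 := descSide_lt hT hq2 (lt_of_le_of_ne h' hne) hq2k
          have h3 : (fpred p).val = p.val - 1 := rfl
          have h4 : (fpred p).val < c.val := h2
          omega
      have hqq : q = q2 := uniqueAbove hT hq hqc hq2 hq2c
      exact Or.inr (Or.inl ⟨q, ⟨hq, by rw [hqq]; exact hq2k⟩, hqk⟩)
    · exact Or.inr (Or.inr ⟨hpk, hck'⟩)

lemma rot_nice : Nice (rotTree T c p hT hP hlt) := by
  have hcpne : c ≠ p := Fin.ne_of_lt hlt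
  constructor
  · rfl
  · -- legs
    intro l
    show rparent T c p (Sum.inr l) = _
    rw [rparent_other (by simp) (by simp) ?hm]
    · exact hT.leg l
    case hm =>
      intro hm
      exact absurd (hT.anc_of_leg hm.2) (fun h => nomatch h)
  · -- spine
    intro i w hw
    replace hw : rparent T c p (Sum.inl i) = some w := hw
    by_cases h1 : (Sum.inl i : CatV n m) = Sum.inl c
    · rw [h1, rparent_c] at hw; exact hT.spine p w hw
    by_cases h2 : (Sum.inl i : CatV n m) = Sum.inl p
    · rw [h2, rparent_p hcpne] at hw
      exact ⟨c, (Option.some_injective _ hw).symm⟩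
    by_cases h3 : Mv T c p (Sum.inl i)
    · rw [rparent_mv h1 h2 h3] at hw
      exact ⟨p, (Option.some_injective _ hw).symm⟩
    · rw [rparent_other h1 h2 h3] at hw
      exact hT.spine i w hw
  · -- comp
    intro i h
    set i1 : Fin n := ⟨i.val + 1, h⟩ with hi1
    rcases hT.comp i h with hc | hc
    · -- SA T i i1
      by_cases h1 : i = c
      · subst h1
        left
        exact (rot_anc_c hT hP hlt).mpr (RTree.anc_trans (hpc' hP) hc)
      by_cases h2 : i = p
      · subst h2
        left
        refine (rot_sa_p hT hP hlt).mpr ⟨hc, ?_⟩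
        simp only [hi1, Fin.lt_def]
        omega
      · left
        exact (rot_anc_other hT hP hlt (by simp [h1]) (by simp [h2])).mpr hc
    · -- SA T i1 i
      by_cases h1 : i1 = c
      · subst h1
        right
        exact (rot_anc_c hT hP hlt).mpr (RTree.anc_trans (hpc' hP) hc)
      by_cases h2 : i1 = p
      · subst h2
        by_cases h3 : i = c
        · subst h3
          left
          exact (rot_anc_c hT hP hlt).mpr (T.anc_refl _)
        · right
          refine (rot_sa_p hT hP hlt).mpr ⟨hc, ?_⟩
          have hle : c.val ≤ i.val := by
            have : c.val < i.val + 1 := hlt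
            omega
          have : c.val ≠ i.val := fun he => h3 (Fin.ext he.symm)
          show c.val < i.val
          omega
      · right
        exact (rot_anc_other hT hP hlt (by simp [h1]) (by simp [h2])).mpr hc
  · -- intv
    intro a i j k hi hj hik hkj
    by_cases h1 : a = c
    · rw [h1] at hi hj ⊢
      refine (rot_anc_c hT hP hlt).mpr ?_
      exact hT.intv p i j k ((rot_anc_c hT hP hlt).mp hi) ((rot_anc_c hT hP hlt).mp hj) hik hkj
    by_cases h2 : a = p
    · rw [h2] at hi hj ⊢
      obtain ⟨hi', hci⟩ := (rot_sa_p hT hP hlt).mp hi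
      obtain ⟨hj', _⟩ := (rot_sa_p hT hP hlt).mp hj
      refine (rot_sa_p hT hP hlt).mpr ⟨hT.intv p i j k hi' hj' hik hkj, lt_of_lt_of_le hci hik⟩
    · have e1 : ∀ w : Fin n, (rotTree T c p hT hP hlt).Anc (Sum.inl a) (Sum.inl w) ↔
          T.Anc (Sum.inl a) (Sum.inl w) :=
        fun w => rot_anc_other hT hP hlt (by simp [h1]) (by simp [h2])
      exact (e1 k).mpr (hT.intv a i j k ((e1 i).mp hi) ((e1 j).mp hj) hik hkj)

end Derived


section RotProps

lemma mv_iff_adj (hT : Nice T) (hP : T.parent (Sum.inl c) = some (Sum.inl p)) (hlt : c < p)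
    {x : CatV n m} (hxp : x ≠ Sum.inl p) (hx : T.parent x = some (Sum.inl c)) :
    (∃ u ∈ T.descSet x, (caterpillar n m).Adj u (Sum.inl p)) ↔ Mv T c p x := by
  cases x with
  | inr l =>
      have hl1 : l.1 = c := by
        have h := hT.leg l
        rw [hx] at h
        exact Sum.inl_injective (Option.some_injective _ h.symm)
      constructor
      · rintro ⟨u, hu, hadj⟩
        have hul : u = Sum.inr l := hT.anc_of_leg hu
        subst hul
        have : l.1 = p := hadj
        exfalso
        rw [hl1] at this
        exact Fin.ne_of_lt hlt this
      · intro hm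
        exact absurd (hT.anc_of_leg hm.2) (fun h => nomatch h)
  | inl x' =>
      have hxp' : x' ≠ p := fun he => hxp (by rw [he])
      constructor
      · rintro ⟨u, hu, hadj⟩
        cases u with
        | inr l =>
            have hlp : l.1 = p := hadj
            rcases hT.anc_to_leg hu with h' | h'
            · exact absurd h' (fun h => nomatch h)
            · rw [hlp] at h'
              exfalso
              have hpx : T.Anc (Sum.inl p) (Sum.inl x') :=
                RTree.anc_trans (hpc' hP) (RTree.anc_of_parent hx)
              exact hxp' (sa_antisymm (h' : SA T x' p) hpx)
        | inl j =>
            rcases (hadj : j.val + 1 = p.val ∨ p.val + 1 = j.val) with hj1 | hj2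
            · have hje : j = fpred p := Fin.ext (show j.val = p.val - 1 by omega)
              exact ⟨hx, by rw [← hje]; exact hu⟩
            · exfalso
              have hcj : SA T c j := RTree.anc_trans (RTree.anc_of_parent hx) hu
              have := desc_c_lt hT hP hlt hcj
              have : j.val < p.val := this
              omega
      · intro hm
        refine ⟨Sum.inl (fpred p), hm.2, ?_⟩
        show (fpred p).val + 1 = p.val ∨ p.val + 1 = (fpred p).val
        left
        have : c.val < p.val := hlt
        show p.val - 1 + 1 = p.val
        omega

variable (hT : Nice T) (hP : T.parent (Sum.inl c) = some (Sum.inl p)) (hlt : c < p)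

lemma rot_isrot :
    IsRotationAt (caterpillar n m) T (rotTree T c p hT hP hlt) (Sum.inl p) (Sum.inl c) := by
  have hcpne : c ≠ p := Fin.ne_of_lt hlt
  refine ⟨hP, hT.suppEq.symm, rparent_c, rparent_p hcpne, ?_, ?_⟩
  · intro x hxp hx
    have hxc : x ≠ Sum.inl c := by
      intro he; rw [he] at hx; exact T.no_self_parent _ hx
    constructor
    · intro hcond
      exact rparent_mv hxc hxp ((mv_iff_adj hT hP hlt hxp hx).mp hcond)
    · intro hncond
      have hnm : ¬ Mv T c p x := fun hm => hncond ((mv_iff_adj hT hP hlt hxp hx).mpr hm)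
      show rparent T c p x = some (Sum.inl c)
      rw [rparent_other hxc hxp hnm]
      exact hx
  · intro x hxc hxp hx
    have hnm : ¬ Mv T c p x := fun hm => hx hm.1
    exact rparent_other hxc hxp hnm

lemma rot_isrot_rev :
    IsRotationAt (caterpillar n m) (rotTree T c p hT hP hlt) T (Sum.inl c) (Sum.inl p) := by
  have hcpne : c ≠ p := Fin.ne_of_lt hlt
  refine ⟨rparent_p hcpne, hT.suppEq, rparent_c.symm, hP, ?_, ?_⟩
  · intro x hxc hx
    replace hx : rparent T c p x = some (Sum.inl p) := hx
    by_cases hxp : x = Sum.inl p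
    · rw [hxp, rparent_p hcpne] at hx
      exact absurd (Sum.inl_injective (Option.some_injective _ hx)) hcpne
    by_cases hxm : Mv T c p x
    · obtain ⟨x', hx'e⟩ := mv_spine hT hxm
      subst hx'e
      obtain ⟨hn, hsa⟩ := aboveNbr hT hxm.1 (mv_self_gt hT hP hlt hxm)
      constructor
      · intro _; exact hxm.1
      · intro hncond
        exfalso
        refine hncond ⟨Sum.inl ⟨c.val + 1, hn⟩, ?_, ?_⟩
        · show (rotTree T c p hT hP hlt).Anc (Sum.inl x') (Sum.inl ⟨c.val + 1, hn⟩)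
          exact (rot_anc_other hT hP hlt (by simp [mv_ne_c hxm]) (by simp [mv_ne_p hP hxm])).mpr hsa
        · show (⟨c.val + 1, hn⟩ : Fin n).val + 1 = c.val ∨ c.val + 1 = (⟨c.val + 1, hn⟩ : Fin n).val
          right; rfl
    · rw [rparent_other hxc hxp hxm] at hx
      constructor
      · intro hcond
        exfalso
        obtain ⟨u, hu, hadj⟩ := hcond
        have hu' : T.Anc x u := (rot_anc_other hT hP hlt hxc hxp).mp hu
        cases x with
        | inr l =>
            have hl1 : l.1 = p := by
              have h := hT.leg l
              rw [hx] at h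
              exact Sum.inl_injective (Option.some_injective _ h.symm)
            have hul : u = Sum.inr l := hT.anc_of_leg hu'
            subst hul
            have : l.1 = c := hadj
            rw [hl1] at this
            exact hcpne this.symm
        | inl x' =>
            have hx'c : x' ≠ c := fun he => hxc (by rw [he])
            have hx'p : x' ≠ p := fun he => hxp (by rw [he])
            cases u with
            | inr l =>
                have hlc : l.1 = c := hadj
                rcases hT.anc_to_leg hu' with h' | h'
                · exact nomatch h'
                · rw [hlc] at h'
                  rcases ReflTransGen.cases_head (h' : T.Anc _ _) with h'' | ⟨e, he, hrest⟩
                  · exact hx'c (Sum.inl_injective h'').symm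
                  · have : e = Sum.inl p := Option.some_injective _ (hP ▸ he).symm
                    rw [this] at hrest
                    exact RTree.not_anc_child hx hrest
            | inl j =>
                have hadj' : j.val + 1 = c.val ∨ c.val + 1 = j.val := hadj
                have hpx' : p < x' := by
                  have hne : x' ≠ p := hx'p
                  rcases lt_or_ge x' p with h' | h'
                  · exact absurd (uniqueBelow hT hx h' hP hlt) hx'c
                  · exact lt_of_le_of_ne h' (Ne.symm hne)
                have := descSide_gt hT hx hpx' (hu' : SA T x' j)
                have h1 : p.val < j.val := this
                have h2 : c.val < p.val := hlt
                omega
      · intro _; exact hx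
  · intro x hxp hxc hx
    by_cases hxm : Mv T c p x
    · exact absurd (rparent_mv hxc hxp hxm) hx
    · exact (rparent_other hxc hxp hxm).symm

end RotProps


section RSet

open Classical in
/-- The set of spine vertices all of whose ancestors are `≤` themselves. -/
noncomputable def RSetF (T : RTree (CatV n m)) : Finset (Fin n) :=
  Finset.univ.filter (fun v => ∀ a, SA T a v → a ≤ v)

lemma mem_RSetF {T : RTree (CatV n m)} {v : Fin n} :
    v ∈ RSetF T ↔ ∀ a, SA T a v → a ≤ v := by simp [RSetF]

lemma rot_rset_mono (hT : Nice T) (hP : T.parent (Sum.inl c) = some (Sum.inl p)) (hlt : c < p)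
    {v : Fin n} (hv : v ∈ RSetF T) : v ∈ RSetF (rotTree T c p hT hP hlt) := by
  rw [mem_RSetF] at hv ⊢
  intro a ha
  by_cases h1 : a = c
  · have h2 : SA T p v := (rot_anc_c hT hP hlt).mp (h1 ▸ ha)
    have h3 := hv p h2
    have h4 : c.val < p.val := hlt
    have h5 : p.val ≤ v.val := h3
    show a.val ≤ v.val
    rw [h1]
    omega
  by_cases h2 : a = p
  · have h3 := (rot_sa_p hT hP hlt).mp (h2 ▸ ha)
    have h4 := hv p h3.1
    rw [h2]
    exact h4
  · exact hv a ((rot_anc_other hT hP hlt (by simp [h1]) (by simp [h2])).mp ha)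

lemma rot_rset_c (hT : Nice T) (hP : T.parent (Sum.inl c) = some (Sum.inl p)) (hlt : c < p)
    (hp : ∀ a, SA T a p → a ≤ p) : c ∈ RSetF (rotTree T c p hT hP hlt) := by
  rw [mem_RSetF]
  intro a ha
  by_cases h1 : a = c
  · exact h1.le
  by_cases h2 : a = p
  · have h3 := (rot_sa_p hT hP hlt).mp (h2 ▸ ha)
    exact absurd h3.2 (lt_irrefl c)
  · have ha' : SA T a c := (rot_anc_other hT hP hlt (by simp [h1]) (by simp [h2])).mp ha
    rcases ReflTransGen.cases_head (ha' : T.Anc _ _) with h' | ⟨e, he, hrest⟩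
    · exact (Sum.inl_injective h').ge
    · have he' : e = Sum.inl p := Option.some_injective _ (hP ▸ he).symm
      rw [he'] at hrest
      have hap : SA T a p := hrest
      have hle : a ≤ p := hp a hap
      by_contra hac
      push_neg at hac
      obtain ⟨q, hq, hqp⟩ := hT.childToward hap (Ne.symm h2)
      have hqc : SA T q c :=
        ReflTransGen.head hP (hqp : ReflTransGen (fun x y => T.parent x = some y) _ _)
      have hqa : SA T q a := hT.intv q c p a hqc hqp (le_of_lt hac) hle
      have : q = a := sa_antisymm hqa (sa_of_parent hq)
      rw [this] at hq
      exact T.no_self_parent _ hq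

end RSet

section Chain

/-- The parent function of the canonical chain tree. -/
def chainParent (n : ℕ) (m : Fin n → ℕ) : CatV n m → Option (CatV n m)
  | Sum.inl i => if _ : i.val = 0 then none
      else some (Sum.inl ⟨i.val - 1, by have := i.isLt; omega⟩)
  | Sum.inr l => some (Sum.inl l.1)

/-- The canonical chain tree. -/
noncomputable def chainT (n : ℕ) (m : Fin n → ℕ) (hn : 0 < n) : RTree (CatV n m) where
  supp := Finset.univ
  parent := chainParent n m
  parent_eq_none := fun v hv => absurd (Finset.mem_univ v) hv
  mem_of_parent := fun _ => ⟨Finset.mem_univ _, Finset.mem_univ _⟩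
  root_unique := by
    intro v _ w _ hv hw
    have key : ∀ u : CatV n m, chainParent n m u = none → u = Sum.inl ⟨0, hn⟩ := by
      intro u hu
      cases u with
      | inr l => exact absurd hu (by simp [chainParent])
      | inl i =>
          by_cases h : i.val = 0
          · congr 1
            exact Fin.ext h
          · rw [chainParent, dif_neg h] at hu
            exact absurd hu (by simp)
    rw [key v hv, key w hw]
  reaches_root := by
    intro v _
    refine ⟨Sum.inl ⟨0, hn⟩, Finset.mem_univ _, by simp [chainParent], ?_⟩
    have claim : ∀ (N : ℕ) (i : Fin n), i.val ≤ N →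
        Relation.ReflTransGen (fun a b => chainParent n m a = some b)
          (Sum.inl i) (Sum.inl ⟨0, hn⟩) := by
      intro N
      induction N with
      | zero =>
          intro i hi
          have : i = ⟨0, hn⟩ := Fin.ext (by simp; omega)
          rw [this]
      | succ N ih =>
          intro i hi
          by_cases h : i.val = 0
          · have : i = ⟨0, hn⟩ := Fin.ext (by simp; omega)
            rw [this]
          · refine ReflTransGen.head (b := Sum.inl ⟨i.val - 1, by have := i.isLt; omega⟩) ?_ ?_
            · rw [chainParent, dif_neg h]
            · exact ih _ (by simp; omega)
    cases v with
    | inl i => exact claim i.val i le_rfl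
    | inr l =>
        exact ReflTransGen.head (by simp [chainParent]) (claim l.1.val l.1 le_rfl)

lemma chain_char (hn : 0 < n) {T : RTree (CatV n m)} (hT : Nice T)
    (hall : RSetF T = Finset.univ) : T = chainT n m hn := by
  have hR : ∀ (v a : Fin n), SA T a v → a ≤ v := by
    intro v
    rw [← mem_RSetF (T := T)]
    rw [hall]
    exact Finset.mem_univ v
  refine RTree.ext' (hT.suppEq.trans rfl) ?_
  funext v
  cases v with
  | inr l => rw [hT.leg l]; rfl
  | inl i =>
      show T.parent (Sum.inl i) = chainParent n m (Sum.inl i)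
      by_cases h : i.val = 0
      · rw [chainParent, dif_pos h]
        cases hp : T.parent (Sum.inl i) with
        | none => rfl
        | some w =>
            obtain ⟨j, hj⟩ := hT.spine i w hp
            rw [hj] at hp
            have h1 : SA T j i := sa_of_parent hp
            have h2 := hR i j h1
            have h3 : j = i := Fin.ext (by have : j.val ≤ i.val := h2; omega)
            rw [h3] at hp
            exact absurd hp (T.no_self_parent _)
      · rw [chainParent, dif_neg h]
        set i' : Fin n := ⟨i.val - 1, by have := i.isLt; omega⟩ with hi'
        have hi'1 : i'.val + 1 < n := by have := i.isLt; simp [hi']; omega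
        have hieq : (⟨i'.val + 1, hi'1⟩ : Fin n) = i := Fin.ext (by simp [hi']; omega)
        have hanc : SA T i' i := by
          rcases hT.comp i' hi'1 with hc | hc
          · rwa [hieq] at hc
          · rw [hieq] at hc
            have := hR i' i hc
            have h2 : i.val ≤ i'.val := this
            simp only [hi'] at h2
            omega
        rcases ReflTransGen.cases_head (hanc : T.Anc _ _) with h' | ⟨e, he, hrest⟩
        · exfalso
          have := Sum.inl_injective h'
          simp only [hi'] at this
          have : i.val = i.val - 1 := congrArg Fin.val this
          omega
        · cases e with
          | inr l => exact absurd he (hT.leg_no_child _ _)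
          | inl j =>
              have hji : SA T j i := sa_of_parent he
              have h1 : j ≤ i := hR i j hji
              have h2 : j ≠ i := by
                intro hne; rw [hne] at he; exact T.no_self_parent _ he
              have h3 : SA T i' j := hrest
              have h4 : i' ≤ j := hR j i' h3
              have h5 : j = i' := by
                apply Fin.ext
                have e1 : j.val ≤ i.val := h1
                have e2 : i'.val ≤ j.val := h4
                have e3 : j.val ≠ i.val := fun hh => h2 (Fin.ext hh)
                simp only [hi'] at e2 ⊢
                omega
              rw [← h5]
              exact he

end Chain

section Reach

lemma reaches_trans {G : SimpleGraph (CatV n m)} {k1 k2 : ℕ} {T1 T2 T3 : RTree (CatV n m)}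
    (h1 : ReachesIn G k1 T1 T2) (h2 : ReachesIn G k2 T2 T3) :
    ReachesIn G (k1 + k2) T1 T3 := by
  induction k1 generalizing T1 with
  | zero =>
      have : T1 = T2 := h1
      rw [Nat.zero_add, this]
      exact h2
  | succ k ih =>
      obtain ⟨T', hrot, hrest⟩ := h1
      have : k + 1 + k2 = (k + k2) + 1 := by omega
      rw [this]
      exact ⟨T', hrot, ih hrest⟩

lemma reaches_snoc {G : SimpleGraph (CatV n m)} {k : ℕ} {T1 T2 T3 : RTree (CatV n m)}
    (h1 : ReachesIn G k T1 T2) (h2 : IsRotation G T2 T3) :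
    ReachesIn G (k + 1) T1 T3 :=
  reaches_trans h1 ⟨T3, h2, rfl⟩

lemma main_induction (hn : 0 < n) :
    ∀ (fuel : ℕ) (T : RTree (CatV n m)), Nice T → n ≤ (RSetF T).card + fuel →
    ∃ k ≤ fuel, ReachesIn (caterpillar n m) k T (chainT n m hn) ∧
      ReachesIn (caterpillar n m) k (chainT n m hn) T := by
  intro fuel
  induction fuel with
  | zero =>
      intro T hT hcard
      by_cases hall : RSetF T = Finset.univ
      · have := chain_char hn hT hall
        exact ⟨0, le_rfl, this, this.symm⟩
      · exfalso
        have h1 : (RSetF T).card < n := by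
          have h2 : RSetF T ⊂ Finset.univ := Finset.ssubset_univ_iff.mpr hall
          have h3 := Finset.card_lt_card h2
          simpa using h3
        omega
  | succ fuel ih =>
      intro T hT hcard
      by_cases hall : RSetF T = Finset.univ
      · have := chain_char hn hT hall
        exact ⟨0, by omega, this, this.symm⟩
      · have hNB : (Finset.univ \ RSetF T).Nonempty := by
          rw [Finset.sdiff_nonempty]
          intro hsub
          exact hall (Finset.eq_univ_of_forall (fun x => hsub (Finset.mem_univ x)))
        classical
        obtain ⟨c0, hc0mem, hc0min⟩ := Finset.exists_min_image (Finset.univ \ RSetF T)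
          (fun v => (Finset.univ.filter (fun a => SA T a v)).card) hNB
        have hc0 : c0 ∉ RSetF T := (Finset.mem_sdiff.mp hc0mem).2
        cases hpc : T.parent (Sum.inl c0) with
        | none =>
            exfalso
            apply hc0
            rw [mem_RSetF]
            intro a ha
            rcases ReflTransGen.cases_head (ha : T.Anc _ _) with h' | ⟨e, he, _⟩
            · exact (Sum.inl_injective h').ge
            · rw [hpc] at he; exact nomatch he
        | some w =>
            obtain ⟨p0, hp0e⟩ := hT.spine c0 w hpc
            rw [hp0e] at hpc
            -- p0 is in RSetF by minimality
            have hsub : Finset.univ.filter (fun a => SA T a p0) ⊂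
                Finset.univ.filter (fun a => SA T a c0) := by
              constructor
              · intro a ha
                simp only [Finset.mem_filter, Finset.mem_univ, true_and] at ha ⊢
                exact sa_trans ha (sa_of_parent hpc)
              · intro hss
                have : c0 ∈ Finset.univ.filter (fun a => SA T a p0) := by
                  apply hss
                  simp only [Finset.mem_filter, Finset.mem_univ, true_and]
                  exact sa_refl T c0
                simp only [Finset.mem_filter, Finset.mem_univ, true_and] at this
                exact RTree.not_anc_child hpc this
            have hp0R : p0 ∈ RSetF T := by
              by_contra hp0
              have hp0NB : p0 ∈ Finset.univ \ RSetF T := by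
                rw [Finset.mem_sdiff]
                exact ⟨Finset.mem_univ _, hp0⟩
              have := hc0min p0 hp0NB
              have := Finset.card_lt_card hsub
              omega
            have hp0r : ∀ a, SA T a p0 → a ≤ p0 := mem_RSetF.mp hp0R
            -- c0 < p0
            have hc0lt : c0 < p0 := by
              rw [mem_RSetF] at hc0
              push_neg at hc0
              obtain ⟨a, ha1, ha2⟩ := hc0
              rcases ReflTransGen.cases_head (ha1 : T.Anc _ _) with h' | ⟨e, he, hrest⟩
              · exfalso
                have e := Sum.inl_injective h'
                rw [← e] at ha2
                exact lt_irrefl _ ha2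
              · have he' : e = Sum.inl p0 := Option.some_injective _ (hpc ▸ he).symm
                rw [he'] at hrest
                have := hp0r a hrest
                have e1 : a.val ≤ p0.val := this
                have e2 : c0.val < a.val := ha2
                show c0.val < p0.val
                omega
            set T' := rotTree T c0 p0 hT hpc hc0lt with hT'
            have hNice' : Nice T' := rot_nice hT hpc hc0lt
            have hcard' : (RSetF T).card + 1 ≤ (RSetF T').card := by
              have hins : insert c0 (RSetF T) ⊆ RSetF T' := by
                intro x hx
                rcases Finset.mem_insert.mp hx with h' | h'
                · rw [h']; exact rot_rset_c hT hpc hc0lt hp0r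
                · exact rot_rset_mono hT hpc hc0lt h'
              have := Finset.card_le_card hins
              rwa [Finset.card_insert_of_notMem hc0] at this
            obtain ⟨k, hk, h1, h2⟩ := ih T' hNice' (by omega)
            refine ⟨k + 1, by omega, ?_, ?_⟩
            · exact ⟨T', ⟨Sum.inl p0, Sum.inl c0, rot_isrot hT hpc hc0lt⟩, h1⟩
            · exact reaches_snoc h2 ⟨Sum.inl c0, Sum.inl p0, rot_isrot_rev hT hpc hc0lt⟩

end Reach


end Rot


section STGtoNice

open Relation

variable {n : ℕ} {m : Fin n → ℕ}

/-- The spine index of a vertex. -/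
def sval : CatV n m → Fin n
  | Sum.inl i => i
  | Sum.inr l => l.1

lemma exists_adj_of_walk {V' : Type} {G : SimpleGraph V'} {x y : V'} (w : G.Walk x y)
    (h : x ≠ y) : ∃ u, G.Adj x u := by
  cases w with
  | nil => exact absurd rfl h
  | cons hadj _ => exact ⟨_, hadj⟩

lemma conn_neighbor {D : Set (CatV n m)}
    (hconn : ((restrictG (caterpillar n m) ↑(Finset.univ : Finset (CatV n m))).induce D).Connected)
    {a b : CatV n m} (ha : a ∈ D) (hb : b ∈ D) (hne : a ≠ b) :
    ∃ u ∈ D, (caterpillar n m).Adj a u := by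
  obtain ⟨w⟩ := hconn.preconnected ⟨a, ha⟩ ⟨b, hb⟩
  obtain ⟨u, hadj⟩ := exists_adj_of_walk w (fun he => hne (congrArg Subtype.val he))
  exact ⟨u.1, u.2, (show (restrictG (caterpillar n m) _).Adj _ _ from hadj).1⟩

lemma walk_crossing {D : Set (CatV n m)} {k : Fin n} (hk : (Sum.inl k : CatV n m) ∉ D) :
    ∀ {x y : ↑D}
      (_ : ((restrictG (caterpillar n m) ↑(Finset.univ : Finset (CatV n m))).induce D).Walk x y),
      (sval x.1).val ≤ k.val → x.1 ≠ Sum.inl k → (sval y.1).val ≤ k.val ∧ y.1 ≠ Sum.inl k := by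
  intro x y w
  induction w with
  | nil => exact fun h1 h2 => ⟨h1, h2⟩
  | @cons a b c' h w ih =>
      intro h1 h2
      have hcat : (caterpillar n m).Adj a.1 b.1 := (show (restrictG (caterpillar n m) _).Adj a.1 b.1 from h).1
      have hbD : b.1 ∈ D := b.2
      have hb : (sval b.1).val ≤ k.val ∧ b.1 ≠ Sum.inl k := by
        cases ha' : a.1 with
        | inl i =>
            rw [ha'] at hcat h2 h1
            have hik : i.val < k.val := by
              have hne : i ≠ k := fun he => h2 (by rw [he])
              have h1' : i.val ≤ k.val := h1
              have : i.val ≠ k.val := fun hh => hne (Fin.ext hh)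
              omega
            cases hb' : b.1 with
            | inl j =>
                rw [hb'] at hcat
                have hor : i.val + 1 = j.val ∨ j.val + 1 = i.val := hcat
                have hj : j ≠ k := by
                  intro he
                  apply hk
                  rw [← he, ← hb']
                  exact hbD
                have hjv : j.val ≠ k.val := fun hh => hj (Fin.ext hh)
                constructor
                · show j.val ≤ k.val
                  omega
                · intro he
                  exact hj (Sum.inl_injective he)
            | inr l =>
                rw [hb'] at hcat
                have : l.1 = i := hcat
                constructor
                · show l.1.val ≤ k.val
                  omega
                · exact fun he => nomatch he
        | inr l =>
            rw [ha'] at hcat h1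
            have h1' : l.1.val ≤ k.val := h1
            cases hb' : b.1 with
            | inl j =>
                rw [hb'] at hcat
                have hlj : l.1 = j := hcat
                have hj : j ≠ k := by
                  intro he
                  apply hk
                  rw [← he, ← hb']
                  exact hbD
                have hjv : j.val ≠ k.val := fun hh => hj (Fin.ext hh)
                constructor
                · show j.val ≤ k.val
                  rw [← hlj]
                  omega
                · intro he
                  exact hj (Sum.inl_injective he)
            | inr l2 =>
                rw [hb'] at hcat
                exact absurd hcat (fun hh => hh)
      exact ih hb.1 hb.2

lemma stg_to_nice {T : RTree (CatV n m)} (hSTG : IsSTG (caterpillar n m) T)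
    (hNFL : noFreeLegs T) : Nice T := by
  obtain ⟨hsupp, hconn, hcomp⟩ := hSTG
  have hmem : ∀ v : CatV n m, v ∈ (Finset.univ : Finset (CatV n m)) := fun v => Finset.mem_univ v
  constructor
  · exact hsupp
  · -- legs are attached to their own spine vertex
    intro l
    have hadj : (caterpillar n m).Adj (Sum.inl l.1) (Sum.inr l) := rfl
    rcases hcomp _ _ (hmem _) (hmem _) hadj with h1 | h1
    · -- h1 : T.Anc (inl l.1) (inr l)
      rcases ReflTransGen.cases_head h1 with h' | ⟨e, he, hrest⟩
      · exact absurd h' (fun hh => nomatch hh)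
      · cases e with
        | inr l2 => exact absurd he (hNFL _ _)
        | inl j =>
            by_cases hj : j = l.1
            · rw [← hj]; exact he
            · exfalso
              have hjl : T.Anc (Sum.inl j) (Sum.inr l) := RTree.anc_of_parent he
              have hself : T.Anc (Sum.inl j) (Sum.inl j) := T.anc_refl _
              obtain ⟨u, huD, huadj⟩ := conn_neighbor (hconn (Sum.inl j) (hmem _))
                (show (Sum.inr l : CatV n m) ∈ T.descSet (Sum.inl j) from hjl)
                (show (Sum.inl j : CatV n m) ∈ T.descSet (Sum.inl j) from hself)
                (fun hh => nomatch hh)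
              cases u with
              | inr l2 => exact (huadj : False)
              | inl i =>
                  have : l.1 = i := huadj
                  rw [← this] at huD
                  have h2 : T.Anc (Sum.inl j) (Sum.inl l.1) := huD
                  have h3 : T.Anc (Sum.inl l.1) (Sum.inl j) := hrest
                  exact hj (Sum.inl_injective (RTree.anc_antisymm h2 h3))
    · -- h1 : T.Anc (inr l) (inl l.1) : impossible
      exfalso
      rcases ReflTransGen.cases_tail h1 with h' | ⟨b, _, hstep⟩
      · exact nomatch h'
      · exact hNFL b l hstep
  · -- no vertex has a leg parent
    intro i w hw
    cases w with
    | inl j => exact ⟨j, rfl⟩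
    | inr l => exact absurd hw (hNFL _ _)
  · -- comparability of spine edges
    intro i h
    have hadj : (caterpillar n m).Adj (Sum.inl i) (Sum.inl ⟨i.val + 1, h⟩) := Or.inl rfl
    exact hcomp _ _ (hmem _) (hmem _) hadj
  · -- interval property
    intro a i j k hi hj hik hkj
    by_contra hkD
    have hki : (Sum.inl i : CatV n m) ∈ T.descSet (Sum.inl a) := hi
    have hkj' : (Sum.inl j : CatV n m) ∈ T.descSet (Sum.inl a) := hj
    have hkn : (Sum.inl k : CatV n m) ∉ T.descSet (Sum.inl a) := hkD
    obtain ⟨w⟩ := (hconn (Sum.inl a) (hmem _)).preconnected ⟨Sum.inl i, hki⟩ ⟨Sum.inl j, hkj'⟩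
    have hik' : i ≠ k → (sval (Sum.inl i : CatV n m)).val ≤ k.val := fun _ => hik
    have hine : (Sum.inl i : CatV n m) ≠ Sum.inl k := by
      intro he
      have : i = k := Sum.inl_injective he
      rw [this] at hi
      exact hkD hi
    obtain ⟨hy1, hy2⟩ := walk_crossing hkn w hik hine
    have : j.val ≤ k.val := hy1
    have hkjv : k.val ≤ j.val := hkj
    have : j = k := Fin.ext (by omega)
    exact hy2 (show (Sum.inl j : CatV n m) = Sum.inl k from by rw [this])

end STGtoNice

/-- two search trees on a caterpillar with all leg nodes bound are at
rotation distance `O(n)`. -/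
theorem bound_legs_linear_distance :
    ∃ c : ℝ, 0 < c ∧
      ∀ (n : ℕ), 1 ≤ n → ∀ (m : Fin n → ℕ),
        ∀ T1 T2 : RTree (CatV n m),
          IsSTG (caterpillar n m) T1 → IsSTG (caterpillar n m) T2 →
          noFreeLegs T1 → noFreeLegs T2 →
          ∃ k : ℕ, ReachesIn (caterpillar n m) k T1 T2 ∧ (k : ℝ) ≤ c * n := by
  refine ⟨2, by norm_num, ?_⟩
  intro n hn m T1 T2 h1 h2 hf1 hf2
  have hn' : 0 < n := hn
  have hN1 : Nice T1 := stg_to_nice h1 hf1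
  have hN2 : Nice T2 := stg_to_nice h2 hf2
  obtain ⟨k1, hk1, hr1, _⟩ := main_induction hn' n T1 hN1 (Nat.le_add_left n _)
  obtain ⟨k2, hk2, _, hr2⟩ := main_induction hn' n T2 hN2 (Nat.le_add_left n _)
  refine ⟨k1 + k2, reaches_trans hr1 hr2, ?_⟩
  have hsum : k1 + k2 ≤ 2 * n := by omega
  calc ((k1 + k2 : ℕ) : ℝ) ≤ ((2 * n : ℕ) : ℝ) := by exact_mod_cast hsum
    _ = 2 * n := by push_cast; ring
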